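/- Let T ∈ G be hyperbolic with light-like eigenvectors (y₁,1) and (y₂,1), and let M = span{(y₁,1),(y₂,1)}. Then H ⊕ ℂ = M ⊕ M^† (internal direct sum), T maps M^† bijectively onto M^†, the form A is positive definite on M^†, M^† is complete for the norm induced by A, and the restriction of T to M^† is a unitary operator of the Hilbert space (M^†, A). -/

import Mathlib

noncomputable section

variable {H : Type*} [NormedAddCommGroup H] [InnerProductSpace ℂ H] [CompleteSpace H]

/-- The Hermitian form `A((x,z),(y,w)) = ⟨x,y⟩ - z·conj w` on `H ⊕ ℂ`, linear in the
first argument (the paper's convention); `⟨x,y⟩` (linear in `x`) is `inner y x` in Mathlib. -/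
def formA (u v : H × ℂ) : ℂ :=
  (inner ℂ v.1 u.1 : ℂ) - u.2 * (starRingEnd ℂ) v.2

/-- The standard inner product of the Hilbert space `H ⊕ ℂ`, linear in the first argument. -/
def ipStd (u v : H × ℂ) : ℂ :=
  (inner ℂ v.1 u.1 : ℂ) + u.2 * (starRingEnd ℂ) v.2

/-- Membership in the group `G` of bounded bijective linear maps preserving `A`. -/
def memG (T : (H × ℂ) →L[ℂ] (H × ℂ)) : Prop :=
  Function.Bijective T ∧ ∀ u v : H × ℂ, formA (T u) (T v) = formA u v

/-- `T` is elliptic: it has an eigenvector `(x,1)` with `‖x‖ < 1`. -/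
def IsEllipticG (T : (H × ℂ) →L[ℂ] (H × ℂ)) : Prop :=
  ∃ x : H, ‖x‖ < 1 ∧ ∃ μ : ℂ, T (x, 1) = μ • ((x, 1) : H × ℂ)

/-- Points `x` of the closed unit ball with `(x,1)` an eigenvector of `T`. -/
def fixedBall (T : (H × ℂ) →L[ℂ] (H × ℂ)) : Set H :=
  {x : H | ‖x‖ ≤ 1 ∧ ∃ μ : ℂ, T (x, 1) = μ • ((x, 1) : H × ℂ)}

/-- `T` is hyperbolic: not elliptic, with exactly two fixed points in the closed ball. -/
def IsHyperbolicG (T : (H × ℂ) →L[ℂ] (H × ℂ)) : Prop :=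
  ¬ IsEllipticG T ∧ ∃ x y : H, x ≠ y ∧ fixedBall T = {x, y}

/-- `T` is parabolic: not elliptic, with exactly one fixed point in the closed ball. -/
def IsParabolicG (T : (H × ℂ) →L[ℂ] (H × ℂ)) : Prop :=
  ¬ IsEllipticG T ∧ ∃ x : H, fixedBall T = {x}

/-- `M†`, the `A`-orthogonal complement of a subspace `M` of `H ⊕ ℂ`. -/
def daggerA (M : Submodule ℂ (H × ℂ)) : Submodule ℂ (H × ℂ) where
  carrier := {v | ∀ m ∈ M, formA v m = 0}
  add_mem' := by
    intro a b ha hb m hm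
    have h1 := ha m hm
    have h2 := hb m hm
    simp only [formA, Prod.fst_add, Prod.snd_add, inner_add_right, add_mul] at *
    linear_combination h1 + h2
  zero_mem' := by
    intro m hm
    simp [formA]
  smul_mem' := by
    intro c a ha m hm
    have h1 := ha m hm
    simp only [formA, Prod.smul_fst, Prod.smul_snd, inner_smul_right, smul_eq_mul] at *
    linear_combination c * h1

/-- The norm induced by `A` on a subspace where `A` is positive. -/
def nA (v : H × ℂ) : ℝ := Real.sqrt (formA v v).re

/-- Sequential completeness of a subspace for the norm induced by `A`. -/
def CompleteForA (M : Submodule ℂ (H × ℂ)) : Prop :=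
  ∀ f : ℕ → H × ℂ, (∀ n, f n ∈ M) →
    (∀ ε : ℝ, 0 < ε → ∃ N : ℕ, ∀ m n : ℕ, N ≤ m → N ≤ n → nA (f m - f n) < ε) →
    ∃ v ∈ M, ∀ ε : ℝ, 0 < ε → ∃ N : ℕ, ∀ n : ℕ, N ≤ n → nA (f n - v) < ε

end

section
variable {H : Type*} [NormedAddCommGroup H] [InnerProductSpace ℂ H] [CompleteSpace H]

omit [CompleteSpace H] in
lemma formA_self_re (u : H × ℂ) : (formA u u).re = ‖u.1‖^2 - ‖u.2‖^2 := by
  simp [formA, Complex.mul_conj, inner_self_eq_norm_sq_to_K, Complex.normSq_eq_norm_sq,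
    ← Complex.ofReal_pow]

omit [CompleteSpace H] in
lemma formA_self_im (u : H × ℂ) : (formA u u).im = 0 := by
  simp [formA, Complex.mul_conj, inner_self_eq_norm_sq_to_K, ← Complex.ofReal_pow]

omit [CompleteSpace H] in
lemma formA_add_left (u v w : H × ℂ) : formA (u + v) w = formA u w + formA v w := by
  simp [formA, inner_add_right]; ring

omit [CompleteSpace H] in
lemma formA_sub_left (u v w : H × ℂ) : formA (u - v) w = formA u w - formA v w := by
  simp [formA, inner_sub_right]; ring

omit [CompleteSpace H] in
lemma formA_smul_left (c : ℂ) (u w : H × ℂ) : formA (c • u) w = c * formA u w := by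
  simp [formA, inner_smul_right]; ring

omit [CompleteSpace H] in
lemma formA_add_right (u v w : H × ℂ) : formA u (v + w) = formA u v + formA u w := by
  simp [formA, inner_add_left]; ring

omit [CompleteSpace H] in
lemma formA_smul_right (c : ℂ) (u w : H × ℂ) :
    formA u (c • w) = (starRingEnd ℂ) c * formA u w := by
  simp [formA, inner_smul_left]; ring

omit [CompleteSpace H] in
lemma mem_daggerA_pair {a b v : H × ℂ} :
    v ∈ daggerA (Submodule.span ℂ {a, b}) ↔ formA v a = 0 ∧ formA v b = 0 := by
  constructor
  · intro h
    exact ⟨h a (Submodule.subset_span (by simp)), h b (Submodule.subset_span (by simp))⟩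
  · rintro ⟨h1, h2⟩ m hm
    induction hm using Submodule.span_induction with
    | mem x hx => rcases hx with hx | hx <;> subst hx <;> assumption
    | zero => simp [formA]
    | add x y _ _ hx hy => rw [formA_add_right, hx, hy, add_zero]
    | smul c x _ hx => rw [formA_smul_right, hx, mul_zero]

set_option maxHeartbeats 2000000 in
/-- decomposition of `H ⊕ ℂ` along the two light-like eigenvectors of a
hyperbolic isometry; the restriction of `T` to `M†` is a unitary of `(M†, A)`. -/
theorem hyperbolic_decomposition (T : (H × ℂ) →L[ℂ] (H × ℂ))
    (hT : memG T) (hhyp : IsHyperbolicG T)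
    (y₁ y₂ : H) (hne : y₁ ≠ y₂)
    (hlight₁ : formA ((y₁, 1) : H × ℂ) ((y₁, 1) : H × ℂ) = 0)
    (hlight₂ : formA ((y₂, 1) : H × ℂ) ((y₂, 1) : H × ℂ) = 0)
    (μ₁ μ₂ : ℂ)
    (heig₁ : T (y₁, 1) = μ₁ • ((y₁, 1) : H × ℂ))
    (heig₂ : T (y₂, 1) = μ₂ • ((y₂, 1) : H × ℂ))
    (M : Submodule ℂ (H × ℂ))
    (hM : M = Submodule.span ℂ {((y₁, 1) : H × ℂ), ((y₂, 1) : H × ℂ)}) :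
    -- internal direct sum H ⊕ ℂ = M ⊕ M†
    IsCompl M (daggerA M) ∧
    -- T maps M† bijectively onto M†
    Set.BijOn T (daggerA M : Set (H × ℂ)) (daggerA M : Set (H × ℂ)) ∧
    -- A is positive definite on M†
    (∀ v ∈ daggerA M, v ≠ 0 → 0 < (formA v v).re ∧ (formA v v).im = 0) ∧
    -- M† is complete for the norm induced by A
    CompleteForA (daggerA M) ∧
    -- the restriction of T to M† is a unitary of the Hilbert space (M†, A)
    (∀ u ∈ daggerA M, ∀ w ∈ daggerA M, formA (T u) (T w) = formA u w) := by
  clear hhyp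
  subst hM
  -- basic norms
  have hy1sq : ‖y₁‖ ^ 2 = 1 := by
    have h := congrArg Complex.re hlight₁
    rw [formA_self_re] at h
    simp only [norm_one, Complex.zero_re] at h
    linarith
  have hy2sq : ‖y₂‖ ^ 2 = 1 := by
    have h := congrArg Complex.re hlight₂
    rw [formA_self_re] at h
    simp only [norm_one, Complex.zero_re] at h
    linarith
  have hd : 0 < ‖y₁ - y₂‖ := norm_pos_iff.mpr (sub_ne_zero.mpr hne)
  have hpar : ‖y₁ + y₂‖ ^ 2 + ‖y₁ - y₂‖ ^ 2 = 4 := by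
    have h := parallelogram_law_with_norm ℂ y₁ y₂
    nlinarith [h]
  have hs2 : ‖y₁ + y₂‖ ≤ 2 := by nlinarith [norm_nonneg (y₁ + y₂), sq_nonneg ‖y₁ - y₂‖]
  -- eigenvalues are nonzero
  have hμ₁ : μ₁ ≠ 0 := by
    intro h
    rw [h, zero_smul] at heig₁
    have h0 : ((y₁, 1) : H × ℂ) = 0 := hT.1.1 (by rw [heig₁, map_zero])
    simpa using congrArg Prod.snd h0
  have hμ₂ : μ₂ ≠ 0 := by
    intro h
    rw [h, zero_smul] at heig₂
    have h0 : ((y₂, 1) : H × ℂ) = 0 := hT.1.1 (by rw [heig₂, map_zero])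
    simpa using congrArg Prod.snd h0
  have hμ₁c : (starRingEnd ℂ) μ₁ ≠ 0 := (map_ne_zero (starRingEnd ℂ)).mpr hμ₁
  have hμ₂c : (starRingEnd ℂ) μ₂ ≠ 0 := (map_ne_zero (starRingEnd ℂ)).mpr hμ₂
  -- the quantity c = A(e₁,e₂) is nonzero
  have hA12 : formA ((y₁, 1) : H × ℂ) ((y₂, 1) : H × ℂ) = (inner ℂ y₂ y₁ : ℂ) - 1 := by
    simp [formA]
  have hA21 : formA ((y₂, 1) : H × ℂ) ((y₁, 1) : H × ℂ)
      = (starRingEnd ℂ) ((inner ℂ y₂ y₁ : ℂ) - 1) := by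
    simp [formA, map_sub, inner_conj_symm]
  have hc : (inner ℂ y₂ y₁ : ℂ) - 1 ≠ 0 := by
    intro h
    have h1 : (inner ℂ y₂ y₁ : ℂ) = 1 := by linear_combination h
    have h2 : (inner ℂ y₁ y₂ : ℂ) = 1 := by
      rw [← inner_conj_symm, h1, map_one]
    have h3 := @norm_sub_sq ℂ _ _ _ _ y₁ y₂
    rw [h2] at h3
    simp only [RCLike.one_re] at h3
    nlinarith [h3, hy1sq, hy2sq, hd]
  have hcc : (starRingEnd ℂ) ((inner ℂ y₂ y₁ : ℂ) - 1) ≠ 0 :=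
    (map_ne_zero (starRingEnd ℂ)).mpr hc
  -- quantitative bounds on M†
  have key : ∀ u : H × ℂ, u ∈ daggerA (Submodule.span ℂ {((y₁, 1) : H × ℂ), (y₂, 1)}) →
      ‖u.2‖ * 2 ≤ ‖y₁ + y₂‖ * ‖u.1‖ := by
    intro u hu
    obtain ⟨h1, h2⟩ := mem_daggerA_pair.mp hu
    simp only [formA, map_one, mul_one, sub_eq_zero] at h1 h2
    have hadd : (inner ℂ (y₁ + y₂) u.1 : ℂ) = 2 * u.2 := by
      rw [inner_add_left, h1, h2]; ring
    have hb := norm_inner_le_norm (𝕜 := ℂ) (y₁ + y₂) u.1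
    rw [hadd] at hb
    simpa [norm_mul, mul_comm] using hb
  have hle2 : ∀ u : H × ℂ, u ∈ daggerA (Submodule.span ℂ {((y₁, 1) : H × ℂ), (y₂, 1)}) →
      ‖u.2‖ ≤ ‖u.1‖ := by
    intro u hu
    nlinarith [key u hu, norm_nonneg u.1, norm_nonneg u.2]
  have hre : ∀ u : H × ℂ, u ∈ daggerA (Submodule.span ℂ {((y₁, 1) : H × ℂ), (y₂, 1)}) →
      ‖y₁ - y₂‖ ^ 2 / 4 * ‖u.1‖ ^ 2 ≤ (formA u u).re := by
    intro u hu
    rw [formA_self_re]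
    have hsq : (‖u.2‖ * 2) * (‖u.2‖ * 2) ≤ (‖y₁ + y₂‖ * ‖u.1‖) * (‖y₁ + y₂‖ * ‖u.1‖) :=
      mul_self_le_mul_self (by positivity) (key u hu)
    nlinarith [hsq, hpar, sq_nonneg ‖u.1‖]
  -- norm comparison
  have hnorm_le : ∀ u : H × ℂ, u ∈ daggerA (Submodule.span ℂ {((y₁, 1) : H × ℂ), (y₂, 1)}) →
      ‖u‖ ≤ 2 / ‖y₁ - y₂‖ * nA u := by
    intro u hu
    have h2 : ‖u‖ ≤ ‖u.1‖ := by
      rw [Prod.norm_def]; exact max_le le_rfl (hle2 u hu)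
    have h3 : ‖y₁ - y₂‖ / 2 * ‖u.1‖ ≤ nA u := by
      have hnn : (0:ℝ) ≤ ‖y₁ - y₂‖ / 2 * ‖u.1‖ := by positivity
      refine (Real.le_sqrt hnn (le_trans (by positivity) (hre u hu))).mpr ?_
      nlinarith [hre u hu]
    rw [div_mul_eq_mul_div, le_div_iff₀ hd]
    nlinarith [h2, h3]
  have hnA_le : ∀ u : H × ℂ, nA u ≤ ‖u‖ := by
    intro u
    have h2 : (formA u u).re ≤ ‖u.1‖ ^ 2 := by
      rw [formA_self_re]; nlinarith [sq_nonneg ‖u.2‖]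
    calc nA u ≤ Real.sqrt (‖u.1‖ ^ 2) := Real.sqrt_le_sqrt h2
      _ = ‖u.1‖ := Real.sqrt_sq (norm_nonneg _)
      _ ≤ ‖u‖ := norm_fst_le u
  refine ⟨⟨?_, ?_⟩, ⟨?_, hT.1.1.injOn, ?_⟩, ?_, ?_, fun u _ w _ => hT.2 u w⟩
  -- Disjoint
  · rw [Submodule.disjoint_def]
    intro v hvM hvD
    obtain ⟨a, b, hab⟩ := Submodule.mem_span_pair.mp hvM
    obtain ⟨h1, h2⟩ := mem_daggerA_pair.mp hvD
    rw [← hab, formA_add_left, formA_smul_left, formA_smul_left, hlight₁, hA21] at h1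
    rw [← hab, formA_add_left, formA_smul_left, formA_smul_left, hA12, hlight₂] at h2
    have hb : b = 0 := by
      have h1' : b * (starRingEnd ℂ) ((inner ℂ y₂ y₁ : ℂ) - 1) = 0 := by linear_combination h1
      rcases mul_eq_zero.mp h1' with h | h
      · exact h
      · exact absurd h hcc
    have ha : a = 0 := by
      have h2' : a * ((inner ℂ y₂ y₁ : ℂ) - 1) = 0 := by linear_combination h2
      rcases mul_eq_zero.mp h2' with h | h
      · exact h
      · exact absurd h hc
    rw [← hab, ha, hb, zero_smul, zero_smul, add_zero]
  -- Codisjoint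
  · rw [codisjoint_iff, eq_top_iff]
    intro v _
    rw [Submodule.mem_sup]
    set a : ℂ := formA v ((y₂,1) : H × ℂ) / ((inner ℂ y₂ y₁ : ℂ) - 1) with ha
    set b : ℂ := formA v ((y₁,1) : H × ℂ) / (starRingEnd ℂ) ((inner ℂ y₂ y₁ : ℂ) - 1) with hb
    refine ⟨a • ((y₁,1) : H × ℂ) + b • ((y₂,1) : H × ℂ),
      Submodule.mem_span_pair.mpr ⟨a, b, rfl⟩,
      v - (a • ((y₁,1) : H × ℂ) + b • ((y₂,1) : H × ℂ)), ?_, by abel⟩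
    refine mem_daggerA_pair.mpr ⟨?_, ?_⟩
    · rw [formA_sub_left, formA_add_left, formA_smul_left, formA_smul_left, hlight₁, hA21,
        mul_zero, zero_add, hb, div_mul_cancel₀ _ hcc, sub_self]
    · rw [formA_sub_left, formA_add_left, formA_smul_left, formA_smul_left, hA12, hlight₂,
        mul_zero, add_zero, ha, div_mul_cancel₀ _ hc, sub_self]
  -- MapsTo
  · intro v hv
    obtain ⟨h1, h2⟩ := mem_daggerA_pair.mp hv
    refine mem_daggerA_pair.mpr ⟨?_, ?_⟩
    · have h := hT.2 v ((y₁,1) : H × ℂ)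
      rw [heig₁, formA_smul_right, h1] at h
      rcases mul_eq_zero.mp h with h' | h'
      · exact absurd h' hμ₁c
      · exact h'
    · have h := hT.2 v ((y₂,1) : H × ℂ)
      rw [heig₂, formA_smul_right, h2] at h
      rcases mul_eq_zero.mp h with h' | h'
      · exact absurd h' hμ₂c
      · exact h'
  -- SurjOn
  · intro w hw
    obtain ⟨v, hv⟩ := hT.1.2 w
    obtain ⟨h1, h2⟩ := mem_daggerA_pair.mp hw
    refine ⟨v, ?_, hv⟩
    refine mem_daggerA_pair.mpr ⟨?_, ?_⟩
    · have h := (hT.2 v ((y₁,1) : H × ℂ)).symm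
      rw [hv, heig₁, formA_smul_right, h1, mul_zero] at h
      exact h
    · have h := (hT.2 v ((y₂,1) : H × ℂ)).symm
      rw [hv, heig₂, formA_smul_right, h2, mul_zero] at h
      exact h
  -- positive definite
  · intro v hv hvne
    refine ⟨?_, formA_self_im v⟩
    have h1 : v.1 ≠ 0 := by
      intro h0
      have hk := key v hv
      rw [h0] at hk
      simp only [norm_zero, mul_zero] at hk
      have hv2 : v.2 = 0 := by
        have : ‖v.2‖ ≤ 0 := by nlinarith [norm_nonneg v.2]
        simpa using le_antisymm this (norm_nonneg _)
      exact hvne (Prod.ext h0 hv2)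
    have hp : 0 < ‖v.1‖ := norm_pos_iff.mpr h1
    have h4 : 0 < ‖y₁ - y₂‖ ^ 2 / 4 * ‖v.1‖ ^ 2 := by positivity
    linarith [hre v hv, h4]
  -- completeness
  · intro f hmem hcau
    have hcauchy : CauchySeq f := by
      rw [Metric.cauchySeq_iff]
      intro ε hε
      obtain ⟨N, hN⟩ := hcau (‖y₁ - y₂‖ * ε / 2) (by positivity)
      refine ⟨N, fun m hm n hn => ?_⟩
      rw [dist_eq_norm]
      have hmemd : f m - f n ∈ daggerA (Submodule.span ℂ {((y₁, 1) : H × ℂ), (y₂, 1)}) :=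
        Submodule.sub_mem _ (hmem m) (hmem n)
      calc ‖f m - f n‖ ≤ 2 / ‖y₁ - y₂‖ * nA (f m - f n) := hnorm_le _ hmemd
        _ < 2 / ‖y₁ - y₂‖ * (‖y₁ - y₂‖ * ε / 2) :=
            mul_lt_mul_of_pos_left (hN m n hm hn) (by positivity)
        _ = ε := by
            have hd' : ‖y₁ - y₂‖ ≠ 0 := ne_of_gt hd
            field_simp
    obtain ⟨v, hv⟩ := cauchySeq_tendsto_of_complete hcauchy
    have hvmem : v ∈ daggerA (Submodule.span ℂ {((y₁, 1) : H × ℂ), (y₂, 1)}) := by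
      refine mem_daggerA_pair.mpr ⟨?_, ?_⟩
      · have hcont : Continuous fun u : H × ℂ => formA u ((y₁,1) : H × ℂ) := by
          unfold formA
          exact (continuous_const.inner continuous_fst).sub (continuous_snd.mul continuous_const)
        have ht : Filter.Tendsto (fun n => formA (f n) ((y₁,1) : H × ℂ)) Filter.atTop
            (nhds (formA v ((y₁,1) : H × ℂ))) := (hcont.tendsto v).comp hv
        have heq : (fun n => formA (f n) ((y₁,1) : H × ℂ)) = fun _ => (0:ℂ) :=
          funext fun n => (mem_daggerA_pair.mp (hmem n)).1
        rw [heq] at ht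
        exact tendsto_nhds_unique ht tendsto_const_nhds
      · have hcont : Continuous fun u : H × ℂ => formA u ((y₂,1) : H × ℂ) := by
          unfold formA
          exact (continuous_const.inner continuous_fst).sub (continuous_snd.mul continuous_const)
        have ht : Filter.Tendsto (fun n => formA (f n) ((y₂,1) : H × ℂ)) Filter.atTop
            (nhds (formA v ((y₂,1) : H × ℂ))) := (hcont.tendsto v).comp hv
        have heq : (fun n => formA (f n) ((y₂,1) : H × ℂ)) = fun _ => (0:ℂ) :=
          funext fun n => (mem_daggerA_pair.mp (hmem n)).2
        rw [heq] at ht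
        exact tendsto_nhds_unique ht tendsto_const_nhds
    refine ⟨v, hvmem, ?_⟩
    intro ε hε
    obtain ⟨N, hN⟩ := Metric.tendsto_atTop.mp hv ε hε
    refine ⟨N, fun n hn => ?_⟩
    calc nA (f n - v) ≤ ‖f n - v‖ := hnA_le _
      _ = dist (f n) v := (dist_eq_norm _ _).symm
      _ < ε := hN n hn


end
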